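/- Under the positivity assumptions on the parameters H, r_endo, r_exo, r_M, r_LM, the symmetric matrix M (as defined for the EWG steady-state equation) is negative definite; in particular, by Gershgorin's theorem all its eigenvalues lie in the disk centered at −d+h with radius 2r_LM + r_M + 3h and have strictly negative real part. -/

import Mathlib

open Matrix

/-- Diagonal block `E = E₀ + h·J` of the EWG steady-state matrix. -/
def Eblk (d h rM rLM : ℝ) : Matrix (Fin 4) (Fin 4) ℝ :=
  !![-d + h, rLM + h, rM + h, rLM + h;
     rLM + h, -d + h, rLM + h, h;
     rM + h, rLM + h, -d + h, rLM + h;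
     rLM + h, h, rLM + h, -d + h]

/-- Off-diagonal coupling block with single entry `r_M` at position (2,4). -/
def F24blk (rM : ℝ) : Matrix (Fin 4) (Fin 4) ℝ :=
  !![0, 0, 0, 0;
     0, 0, 0, rM;
     0, 0, 0, 0;
     0, 0, 0, 0]

/-- `F₄₂ = F₂₄ᵀ`. -/
def F42blk (rM : ℝ) : Matrix (Fin 4) (Fin 4) ℝ := (F24blk rM)ᵀ

/-- The 16×16 block-circulant matrix `M` of the EWG steady-state equation. -/
def Mmat (d h rM rLM : ℝ) : Matrix (Fin 4 × Fin 4) (Fin 4 × Fin 4) ℝ :=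
  fun p q =>
    if q.1 = p.1 then Eblk d h rM rLM p.2 q.2
    else if q.1 = p.1 + 1 then F24blk rM p.2 q.2
    else if q.1 = p.1 + 3 then F42blk rM p.2 q.2
    else 0

/-- A real symmetric strictly (row-)diagonally dominant matrix with positive diagonal
is positive definite. -/
lemma posDef_of_sdd {n : Type*} [Fintype n] [DecidableEq n] {A : Matrix n n ℝ}
    (hsym : A.IsSymm)
    (hsdd : ∀ i, ∑ j ∈ Finset.univ.erase i, |A i j| < A i i) : A.PosDef := by
  have hherm : A.IsHermitian := by
    rw [Matrix.IsHermitian, Matrix.conjTranspose_eq_transpose_of_trivial]; exact hsym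
  refine Matrix.posDef_iff_dotProduct_mulVec.mpr ⟨hherm, fun x hx => ?_⟩
  set c : n → n → ℝ := fun i j => if j = i then 0 else |A i j| with hc
  have hcsymm : ∀ i j, c i j = c j i := by
    intro i j
    by_cases hij : j = i
    · subst hij; rfl
    · simp [hc, hij, Ne.symm hij, hsym.apply i j]
  have hcsum : ∀ i, ∑ j, c i j = ∑ j ∈ Finset.univ.erase i, |A i j| := by
    intro i
    rw [← Finset.add_sum_erase _ _ (Finset.mem_univ i)]
    simp only [hc, if_pos rfl, zero_add]
    exact Finset.sum_congr rfl fun j hj => by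
      simp [Finset.mem_erase.mp hj |>.1]
  have hdot : dotProduct (star x) (A *ᵥ x) = ∑ i, ∑ j, x i * (A i j * x j) := by
    simp [dotProduct, Matrix.mulVec, Finset.mul_sum]
  rw [hdot]
  have hbound : ∀ i j, (if j = i then A i i * x i ^ 2 else 0) - c i j * (x i ^ 2 + x j ^ 2) / 2
      ≤ x i * (A i j * x j) := by
    intro i j
    by_cases hij : j = i
    · subst hij; simp [hc]; ring_nf; rfl
    · simp only [hc, if_neg hij]
      have h1 : |x i * (A i j * x j)| = |A i j| * (|x i| * |x j|) := by
        rw [abs_mul, abs_mul]; ring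
      have h2 : |x i| * |x j| ≤ ((x i)^2 + (x j)^2)/2 := by
        nlinarith [sq_nonneg (|x i| - |x j|), sq_abs (x i), sq_abs (x j)]
      have h3 := neg_abs_le (x i * (A i j * x j))
      nlinarith [mul_le_mul_of_nonneg_left h2 (abs_nonneg (A i j)), abs_nonneg (A i j)]
  have step1 : ∑ i, ∑ j, ((if j = i then A i i * x i ^ 2 else 0) - c i j * (x i ^ 2 + x j ^ 2) / 2)
      ≤ ∑ i, ∑ j, x i * (A i j * x j) :=
    Finset.sum_le_sum fun i _ => Finset.sum_le_sum fun j _ => hbound i j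
  have step2 : ∑ i, ∑ j, ((if j = i then A i i * x i ^ 2 else 0) - c i j * (x i ^ 2 + x j ^ 2) / 2)
      = ∑ i, (A i i - ∑ j, c i j) * x i ^ 2 := by
    have e1 : ∀ i : n, ∑ j, (if j = i then A i i * x i ^ 2 else 0) = A i i * x i ^ 2 := by
      intro i; simp
    have e2 : ∑ i, ∑ j, c i j * x j ^ 2 = ∑ i, ∑ j, c i j * x i ^ 2 := by
      rw [Finset.sum_comm]
      exact Finset.sum_congr rfl fun i _ => Finset.sum_congr rfl fun j _ => by
        rw [hcsymm j i]
    simp only [Finset.sum_sub_distrib, e1]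
    have e3 : ∑ i, ∑ j, c i j * (x i ^ 2 + x j ^ 2) / 2 = ∑ i, (∑ j, c i j) * x i ^ 2 := by
      have key : ∀ i j : n, c i j * (x i ^ 2 + x j ^ 2) / 2
          = c i j * x i ^ 2 / 2 + c i j * x j ^ 2 / 2 := fun i j => by ring
      simp only [key, Finset.sum_add_distrib, ← Finset.sum_div]
      rw [e2]
      have e4 : ∑ i, (∑ j, c i j) * x i ^ 2 = ∑ i, ∑ j, c i j * x i ^ 2 := by
        simp [Finset.sum_mul]
      rw [e4]; ring
    rw [e3]
    simp only [sub_mul, Finset.sum_sub_distrib]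
  have hpos : 0 < ∑ i, (A i i - ∑ j, c i j) * x i ^ 2 := by
    obtain ⟨i0, hi0⟩ := Function.ne_iff.mp hx
    refine Finset.sum_pos' (fun i _ => ?_) ⟨i0, Finset.mem_univ i0, ?_⟩
    · have h1 := hsdd i; rw [← hcsum i] at h1
      exact mul_nonneg (by linarith) (sq_nonneg _)
    · have h1 := hsdd i0; rw [← hcsum i0] at h1
      have h2 : x i0 ≠ 0 := by simpa using hi0
      have h3 : 0 < x i0 ^ 2 := by positivity
      nlinarith
  linarith [step1, step2 ▸ hpos]

lemma Mmat_isSymm (d h rM rLM : ℝ) : (Mmat d h rM rLM).IsSymm := by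
  have hE : ∀ b e : Fin 4, Eblk d h rM rLM b e = Eblk d h rM rLM e b := by
    intro b e; fin_cases b <;> fin_cases e <;> simp [Eblk]
  ext ⟨a, b⟩ ⟨c, e⟩
  show Mmat d h rM rLM (c, e) (a, b) = Mmat d h rM rLM (a, b) (c, e)
  fin_cases a <;> fin_cases c <;>
    simp (config := { decide := true }) [Mmat, hE, F42blk, F24blk, Matrix.transpose_apply]

lemma Mmat_diag (d h rM rLM : ℝ) (k : Fin 4 × Fin 4) : Mmat d h rM rLM k k = -d + h := by
  obtain ⟨a, b⟩ := k
  fin_cases a <;> fin_cases b <;> simp [Mmat, Eblk]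

lemma Mmat_rowsum (d h rM rLM : ℝ) (hh : 0 < h) (hrM : 0 < rM) (hrLM : 0 < rLM) :
    ∀ i : Fin 4 × Fin 4,
      ∑ j ∈ Finset.univ.erase i, |Mmat d h rM rLM i j| = 2 * rLM + rM + 3 * h := by
  have e1 : |rLM + h| = rLM + h := abs_of_pos (by positivity)
  have e2 : |rM + h| = rM + h := abs_of_pos (by positivity)
  have e3 : |h| = h := abs_of_pos hh
  have e4 : |rM| = rM := abs_of_pos hrM
  have hF42 : F42blk rM = !![0, 0, 0, 0; 0, 0, 0, 0; 0, 0, 0, 0; 0, rM, 0, 0] := by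
    ext i j; fin_cases i <;> fin_cases j <;>
      simp [F42blk, F24blk, Matrix.vecHead, Matrix.vecTail]
  rintro ⟨a, b⟩
  rw [Finset.sum_erase_eq_sub (Finset.mem_univ _)]
  fin_cases a <;> fin_cases b <;>
    simp (config := { decide := true }) [Fintype.sum_prod_type, Fin.sum_univ_four, Mmat, Eblk,
      F24blk, hF42, Matrix.cons_val_two, Matrix.cons_val_three,
      Matrix.vecHead, Matrix.vecTail, e1, e2, e3, e4] <;> ring

theorem Mmat_negDef_gershgorin (H rendo rexo rM rLM d h : ℝ)
    (hH : 0 < H) (hrendo : 0 < rendo) (hrexo : 0 < rexo)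
    (hrM : 0 < rM) (hrLM : 0 < rLM)
    (hd : d = H⁻¹ + rendo + rM + 2 * rLM)
    (hh : h = (1 / 4) * (H * rexo / (1 + H * rexo)) * rendo) :
    (Mmat d h rM rLM).IsSymm ∧
    (-(Mmat d h rM rLM)).PosDef ∧
    ∀ μ ∈ spectrum ℂ ((Mmat d h rM rLM).map (algebraMap ℝ ℂ)),
      ‖μ - ((-d + h : ℝ) : ℂ)‖ ≤ 2 * rLM + rM + 3 * h ∧ μ.re < 0 := by
  have hh0 : 0 < h := by rw [hh]; positivity
  have hq : H * rexo / (1 + H * rexo) < 1 := by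
    rw [div_lt_one (by positivity)]; nlinarith
  have h4 : 4 * h < rendo := by
    have : 4 * h = (H * rexo / (1 + H * rexo)) * rendo := by rw [hh]; ring
    rw [this]
    calc (H * rexo / (1 + H * rexo)) * rendo < 1 * rendo :=
          mul_lt_mul_of_pos_right hq hrendo
      _ = rendo := one_mul _
  have hHinv : 0 < H⁻¹ := inv_pos.mpr hH
  have hsymm := Mmat_isSymm d h rM rLM
  have hdiag := Mmat_diag d h rM rLM
  have hrow := Mmat_rowsum d h rM rLM hh0 hrM hrLM
  have hlt : 2 * rLM + rM + 3 * h < d - h := by rw [hd]; linarith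
  refine ⟨hsymm, ?_, ?_⟩
  · apply posDef_of_sdd
    · show (-(Mmat d h rM rLM))ᵀ = -(Mmat d h rM rLM)
      rw [Matrix.transpose_neg, hsymm]
    · intro i
      have h1 : ∑ j ∈ Finset.univ.erase i, |(-(Mmat d h rM rLM)) i j|
          = ∑ j ∈ Finset.univ.erase i, |Mmat d h rM rLM i j| :=
        Finset.sum_congr rfl fun j _ => by simp
      have h2 : (-(Mmat d h rM rLM)) i i = d - h := by
        simp [hdiag i]; ring
      rw [h1, hrow i, h2]; exact hlt
  · intro μ hμ
    set B := (Mmat d h rM rLM).map (algebraMap ℝ ℂ) with hB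
    have hμ' : Module.End.HasEigenvalue (Matrix.toLin' B) μ := by
      apply Module.End.hasEigenvalue_iff_mem_spectrum.mpr
      rwa [show Matrix.toLin' B = Matrix.toLinAlgEquiv' B from rfl, AlgEquiv.spectrum_eq]
    obtain ⟨k, hk⟩ := eigenvalue_mem_ball hμ'
    rw [Metric.mem_closedBall, Complex.dist_eq] at hk
    have hBkk : B k k = ((-d + h : ℝ) : ℂ) := by
      rw [hB, Matrix.map_apply, hdiag k]; rfl
    have hsum : ∑ j ∈ Finset.univ.erase k, ‖B k j‖ = 2 * rLM + rM + 3 * h := by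
      rw [show ∑ j ∈ Finset.univ.erase k, ‖B k j‖
          = ∑ j ∈ Finset.univ.erase k, |Mmat d h rM rLM k j| from
        Finset.sum_congr rfl fun j _ => by
          rw [hB, Matrix.map_apply]
          simp [Complex.norm_real, Real.norm_eq_abs]]
      exact hrow k
    rw [hBkk, hsum] at hk
    refine ⟨hk, ?_⟩
    have h1 : |(μ - ((-d + h : ℝ) : ℂ)).re| ≤ ‖μ - ((-d + h : ℝ) : ℂ)‖ :=
      Complex.abs_re_le_norm _
    have h2 : (μ - ((-d + h : ℝ) : ℂ)).re = μ.re - (-d + h) := by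
      simp [Complex.sub_re]
    rw [h2] at h1
    have h3 := abs_le.mp h1
    linarith [h3.1, h3.2, hk]
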